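/- (Corepresentability Theorem.) Let 𝓔 be a category equipped with a right-monoidal structure ⟨⋆, R, γ, η, ε⟩ and an ordinary monoidal structure ⊗ with the same unit object R (associator α, invertible unit maps ℓ, r), and let Q = ⟨−⋆R, δ, ε⟩ be the canonical comonad of the ⋆-structure. Then the following are equivalent: (i) the ⋆-structure is ⊗-corepresentable, i.e., there exist a ⊗-monoidal comonad ⟨C, Δ, ϵ, C₂, C₀⟩ and a twist isomorphism M⋆N ≅ N⊗CM from the ⋆-structure to the right-monoidal structure M⊙N := N⊗CM it induces; (ii) there exists a natural isomorphism w_{M,N} : N⋆M → M⊗QN satisfying the heptagon w_{L,N⋆M}∘γ_{N,M,L} = (L⊗γ_{N,M,R})∘(L⊗w⁻¹_{QM,N})∘α⁻¹_{L,QM,QN}∘w_{L⊗QM,N}∘(N⋆w_{L,M}) and the tetragon w_{M,R}∘η_M = (M⊗η_R)∘r⁻¹_M; (iii) there exists a tetrahedral isomorphism t_{L,M,N} : N⋆(L⊗M) → L⊗(N⋆M). -/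
import Mathlib


open CategoryTheory

universe v u

/-- A right-monoidal (skew-monoidal) category structure on a category `C`
with unit object `R`: a product `⋆`, a skew-associator `γ`, a unit `η` and
a counit `ε`, none of which is assumed invertible, subject to the pentagon
and the four (co)unit axioms. -/
structure RightMonoidalStruct (C : Type u) [Category.{v} C] (R : C) where
  smp : C → C → C
  smpHom : ∀ {X X' Y Y' : C}, (X ⟶ X') → (Y ⟶ Y') → (smp X Y ⟶ smp X' Y')
  smpHom_id : ∀ (X Y : C), smpHom (𝟙 X) (𝟙 Y) = 𝟙 (smp X Y)
  smpHom_comp : ∀ {X X' X'' Y Y' Y'' : C} (f : X ⟶ X') (f' : X' ⟶ X'')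
      (g : Y ⟶ Y') (g' : Y' ⟶ Y''),
      smpHom (f ≫ f') (g ≫ g') = smpHom f g ≫ smpHom f' g'
  γ : ∀ (L M N : C), smp L (smp M N) ⟶ smp (smp L M) N
  η : ∀ (M : C), M ⟶ smp R M
  ε : ∀ (M : C), smp M R ⟶ M
  γ_natural : ∀ {L L' M M' N N' : C} (f : L ⟶ L') (g : M ⟶ M') (h : N ⟶ N'),
      smpHom f (smpHom g h) ≫ γ L' M' N' = γ L M N ≫ smpHom (smpHom f g) h
  η_natural : ∀ {M M' : C} (f : M ⟶ M'), f ≫ η M' = η M ≫ smpHom (𝟙 R) f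
  ε_natural : ∀ {M M' : C} (f : M ⟶ M'), smpHom f (𝟙 R) ≫ ε M' = ε M ≫ f
  pentagon : ∀ (K L M N : C),
      smpHom (𝟙 K) (γ L M N) ≫ γ K (smp L M) N ≫ smpHom (γ K L M) (𝟙 N)
        = γ K L (smp M N) ≫ γ (smp K L) M N
  unit_triangle : ∀ (M N : C), η (smp M N) ≫ γ R M N = smpHom (η M) (𝟙 N)
  counit_triangle : ∀ (M N : C), γ M N R ≫ ε (smp M N) = smpHom (𝟙 M) (ε N)
  mixed_triangle : ∀ (M N : C),
      smpHom (𝟙 M) (η N) ≫ γ M R N ≫ smpHom (ε M) (𝟙 N) = 𝟙 (smp M N)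
  unit_counit : η R ≫ ε R = 𝟙 R


variable {C : Type u} [Category.{v} C] {R : C}

/-- The multiplication `μ_M := (ε_R ⋆ M) ∘ γ_{R,R,M}` of the canonical monad `T = R ⋆ -`. -/
def RightMonoidalStruct.μ (S : RightMonoidalStruct C R) (M : C) :
    S.smp R (S.smp R M) ⟶ S.smp R M :=
  S.γ R R M ≫ S.smpHom (S.ε R) (𝟙 M)

/-- The comultiplication `δ_M := γ_{M,R,R} ∘ (M ⋆ η_R)` of the canonical comonad `Q = - ⋆ R`. -/
def RightMonoidalStruct.δ (S : RightMonoidalStruct C R) (M : C) :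
    S.smp M R ⟶ S.smp (S.smp M R) R :=
  S.smpHom (𝟙 M) (S.η R) ≫ S.γ M R R


/-- A monoidal comonad `⟨C, Δ, ϵ, C₂, C₀⟩` on the monoidal structure `Sx`
(a right-monoidal structure with invertible comparison maps): a comonad with a
lax monoidal structure for which comultiplication and counit are monoidal
natural transformations. -/
structure MonoidalComonadStr (Sx : RightMonoidalStruct C R) where
  obj : C → C
  map : ∀ {X Y : C}, (X ⟶ Y) → (obj X ⟶ obj Y)
  map_id : ∀ X : C, map (𝟙 X) = 𝟙 (obj X)
  map_comp : ∀ {X Y Z : C} (f : X ⟶ Y) (g : Y ⟶ Z), map (f ≫ g) = map f ≫ map g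
  Δc : ∀ X : C, obj X ⟶ obj (obj X)
  εc : ∀ X : C, obj X ⟶ X
  Δc_natural : ∀ {X Y : C} (f : X ⟶ Y), map f ≫ Δc Y = Δc X ≫ map (map f)
  εc_natural : ∀ {X Y : C} (f : X ⟶ Y), map f ≫ εc Y = εc X ≫ f
  coassoc : ∀ X : C, Δc X ≫ map (Δc X) = Δc X ≫ Δc (obj X)
  counit_left : ∀ X : C, Δc X ≫ εc (obj X) = 𝟙 (obj X)
  counit_right : ∀ X : C, Δc X ≫ map (εc X) = 𝟙 (obj X)
  C2 : ∀ M N : C, Sx.smp (obj M) (obj N) ⟶ obj (Sx.smp M N)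
  C0 : R ⟶ obj R
  C2_natural : ∀ {M M' N N' : C} (f : M ⟶ M') (g : N ⟶ N'),
      Sx.smpHom (map f) (map g) ≫ C2 M' N' = C2 M N ≫ map (Sx.smpHom f g)
  lax_assoc : ∀ L M N : C,
      Sx.smpHom (𝟙 (obj L)) (C2 M N) ≫ C2 L (Sx.smp M N) ≫ map (Sx.γ L M N)
        = Sx.γ (obj L) (obj M) (obj N) ≫ Sx.smpHom (C2 L M) (𝟙 (obj N))
            ≫ C2 (Sx.smp L M) N
  lax_unit : ∀ X : C,
      Sx.η (obj X) ≫ Sx.smpHom C0 (𝟙 (obj X)) ≫ C2 R X = map (Sx.η X)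
  lax_counit : ∀ X : C,
      Sx.smpHom (𝟙 (obj X)) C0 ≫ C2 X R ≫ map (Sx.ε X) = Sx.ε (obj X)
  Δc_monoidal : ∀ M N : C,
      C2 M N ≫ Δc (Sx.smp M N)
        = Sx.smpHom (Δc M) (Δc N) ≫ C2 (obj M) (obj N) ≫ map (C2 M N)
  Δc_monoidal_unit : C0 ≫ Δc R = C0 ≫ map C0
  εc_monoidal : ∀ M N : C,
      C2 M N ≫ εc (Sx.smp M N) = Sx.smpHom (εc M) (εc N)
  εc_monoidal_unit : C0 ≫ εc R = 𝟙 R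

section
variable (S Sx : RightMonoidalStruct C R)
  [∀ L M N : C, IsIso (Sx.γ L M N)]
  [∀ M : C, IsIso (Sx.η M)]
  [∀ M : C, IsIso (Sx.ε M)]

/-- The Prop stating that `v` is a twist isomorphism from the `⋆`-structure `S`
to the right-monoidal structure `M ⊙ N := N ⊗ CM` induced by a `⊗`-monoidal
comonad `Co`. -/
structure CoTwist (Co : MonoidalComonadStr Sx)
    (v : ∀ M N : C, Sx.smp N (Co.obj M) ⟶ S.smp M N) : Prop where
  natural : ∀ {M M' N N' : C} (f : M ⟶ M') (g : N ⟶ N'),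
      Sx.smpHom g (Co.map f) ≫ v M' N' = v M N ≫ S.smpHom f g
  iso : ∀ M N : C, IsIso (v M N)
  hexagon : ∀ L M N : C,
      (inv (Sx.γ N (Co.obj M) (Co.obj L))
          ≫ Sx.smpHom (𝟙 N) (Sx.smpHom (𝟙 (Co.obj M)) (Co.Δc L))
          ≫ Sx.smpHom (𝟙 N) (Co.C2 M (Co.obj L)))
          ≫ Sx.smpHom (𝟙 N) (Co.map (v L M)) ≫ v (S.smp L M) N
        = Sx.smpHom (v M N) (Co.map (𝟙 L)) ≫ v L (S.smp M N) ≫ S.γ L M N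
  unit : ∀ N : C,
      (inv (Sx.ε N) ≫ Sx.smpHom (𝟙 N) Co.C0) ≫ v R N = S.η N
  counit : ∀ M : C,
      v M R ≫ S.ε M = inv (Sx.η (Co.obj M)) ≫ Co.εc M

/-- A natural isomorphism `w_{M,N} : N ⋆ M → M ⊗ QN` (where `Q = - ⋆ R` is the
canonical comonad of the `⋆`-structure) satisfying the heptagon and tetragon
equations of the Corepresentability Theorem. -/
structure GoodWco (w : ∀ M N : C, S.smp N M ⟶ Sx.smp M (S.smp N R)) : Prop where
  natural : ∀ {M M' N N' : C} (f : M ⟶ M') (g : N ⟶ N'),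
      S.smpHom g f ≫ w M' N' = w M N ≫ Sx.smpHom f (S.smpHom g (𝟙 R))
  iso : ∀ M N : C, IsIso (w M N)
  heptagon : ∀ L M N : C,
      S.γ N M L ≫ w L (S.smp N M)
        = S.smpHom (𝟙 N) (w L M)
            ≫ w (Sx.smp L (S.smp M R)) N
            ≫ inv (Sx.γ L (S.smp M R) (S.smp N R))
            ≫ Sx.smpHom (𝟙 L) (@inv _ _ _ _ (w (S.smp M R) N) (iso (S.smp M R) N))
            ≫ Sx.smpHom (𝟙 L) (S.γ N M R)
  tetragon : ∀ M : C,
      S.η M ≫ w M R = inv (Sx.ε M) ≫ Sx.smpHom (𝟙 M) (S.η R)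

/-- A tetrahedral homomorphism `t_{L,M,N} : N ⋆ (L ⊗ M) → L ⊗ (N ⋆ M)` for the
corepresentability setting. -/
structure CoTetraHom
    (t : ∀ L M N : C, S.smp N (Sx.smp L M) ⟶ Sx.smp L (S.smp N M)) : Prop where
  natural : ∀ {L L' M M' N N' : C} (f : L ⟶ L') (g : M ⟶ M') (h : N ⟶ N'),
      S.smpHom h (Sx.smpHom f g) ≫ t L' M' N' = t L M N ≫ Sx.smpHom f (S.smpHom h g)
  pentagon₁ : ∀ K L M N : C,
      S.smpHom (𝟙 N) (inv (Sx.γ K L M)) ≫ t K (Sx.smp L M) N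
          ≫ Sx.smpHom (𝟙 K) (t L M N)
        = t (Sx.smp K L) M N ≫ inv (Sx.γ K L (S.smp N M))
  pentagon₂ : ∀ K L M N : C,
      S.smpHom (𝟙 N) (t K L M) ≫ t K (S.smp M L) N
          ≫ Sx.smpHom (𝟙 K) (S.γ N M L)
        = S.γ N M (Sx.smp K L) ≫ t K L (S.smp N M)
  unit : ∀ M N : C,
      t R M N ≫ inv (Sx.η (S.smp N M)) = S.smpHom (𝟙 N) (inv (Sx.η M))
  counit : ∀ M N : C,
      S.η (Sx.smp M N) ≫ t M N R = Sx.smpHom (𝟙 M) (S.η N)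

/-- The comparison `w_{M,N} := t_{M,R,N} ∘ (N ⋆ r⁻¹_M) : N ⋆ M → M ⊗ QN`
associated to a tetrahedral homomorphism. -/
noncomputable def wOfCo (t : ∀ L M N : C, S.smp N (Sx.smp L M) ⟶ Sx.smp L (S.smp N M))
    (M N : C) : S.smp N M ⟶ Sx.smp M (S.smp N R) :=
  S.smpHom (𝟙 N) (inv (Sx.ε M)) ≫ t M R N

end


namespace Corep

set_option linter.unusedSectionVars false

attribute [local simp] Category.assoc

section Basics

variable (T : RightMonoidalStruct C R)

instance smpHom_isIso {X X' Y Y' : C} (f : X ⟶ X') (g : Y ⟶ Y') [IsIso f] [IsIso g] :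
    IsIso (T.smpHom f g) :=
  ⟨T.smpHom (inv f) (inv g),
    by rw [← T.smpHom_comp, IsIso.hom_inv_id, IsIso.hom_inv_id, T.smpHom_id],
    by rw [← T.smpHom_comp, IsIso.inv_hom_id, IsIso.inv_hom_id, T.smpHom_id]⟩

lemma inv_smpHom {X X' Y Y' : C} (f : X ⟶ X') (g : Y ⟶ Y') [IsIso f] [IsIso g] :
    inv (T.smpHom f g) = T.smpHom (inv f) (inv g) := by
  apply IsIso.inv_eq_of_hom_inv_id
  rw [← T.smpHom_comp, IsIso.hom_inv_id, IsIso.hom_inv_id, T.smpHom_id]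

lemma smpHom_split_r {K X Y Z : C} (a : X ⟶ Y) (b : Y ⟶ Z) :
    T.smpHom (𝟙 K) (a ≫ b) = T.smpHom (𝟙 K) a ≫ T.smpHom (𝟙 K) b := by
  rw [← T.smpHom_comp, Category.comp_id]

lemma smpHom_merge_r {K X Y Z W : C} (a : X ⟶ Y) (b : Y ⟶ Z) (h : T.smp K Z ⟶ W) :
    T.smpHom (𝟙 K) a ≫ T.smpHom (𝟙 K) b ≫ h = T.smpHom (𝟙 K) (a ≫ b) ≫ h := by
  rw [smpHom_split_r, Category.assoc]

lemma smpHom_merge_l {K X Y Z W : C} (a : X ⟶ Y) (b : Y ⟶ Z) (h : T.smp Z K ⟶ W) :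
    T.smpHom a (𝟙 K) ≫ T.smpHom b (𝟙 K) ≫ h = T.smpHom (a ≫ b) (𝟙 K) ≫ h := by
  rw [show T.smpHom (a ≫ b) (𝟙 K) = T.smpHom a (𝟙 K) ≫ T.smpHom b (𝟙 K) from by
    rw [← T.smpHom_comp, Category.comp_id], Category.assoc]

lemma smpHom_cross {X Y K B W : C} (a : X ⟶ Y) (b : K ⟶ B) (h : T.smp Y B ⟶ W) :
    T.smpHom a (𝟙 K) ≫ T.smpHom (𝟙 Y) b ≫ h = T.smpHom a b ≫ h := by
  rw [show T.smpHom a b = T.smpHom a (𝟙 K) ≫ T.smpHom (𝟙 Y) b from by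
    rw [← T.smpHom_comp, Category.comp_id, Category.id_comp], Category.assoc]

lemma smpHom_split_l {K X Y Z : C} (a : X ⟶ Y) (b : Y ⟶ Z) :
    T.smpHom (a ≫ b) (𝟙 K) = T.smpHom a (𝟙 K) ≫ T.smpHom b (𝟙 K) := by
  rw [← T.smpHom_comp, Category.comp_id]

/-- `δ_M ≫ ε_{QM} = 𝟙`. -/
lemma delta_counit_left (M : C) : T.δ M ≫ T.ε (T.smp M R) = 𝟙 _ := by
  rw [RightMonoidalStruct.δ, Category.assoc, T.counit_triangle, ← T.smpHom_comp,
    Category.id_comp, T.unit_counit, T.smpHom_id]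

/-- `δ_M ≫ Q ε_M = 𝟙`. -/
lemma delta_counit_right (M : C) : T.δ M ≫ T.smpHom (T.ε M) (𝟙 R) = 𝟙 _ := by
  rw [RightMonoidalStruct.δ, Category.assoc, T.mixed_triangle]

lemma delta_natural {M M' : C} (f : M ⟶ M') :
    T.smpHom f (𝟙 R) ≫ T.δ M' = T.δ M ≫ T.smpHom (T.smpHom f (𝟙 R)) (𝟙 R) := by
  have h := T.γ_natural f (𝟙 R) (𝟙 R)
  rw [T.smpHom_id] at h
  rw [RightMonoidalStruct.δ, RightMonoidalStruct.δ, ← Category.assoc, ← T.smpHom_comp,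
    Category.comp_id, Category.id_comp, Category.assoc, ← h, ← Category.assoc, ← T.smpHom_comp,
    Category.id_comp, Category.comp_id]

lemma delta_coassoc (M : C) :
    T.δ M ≫ T.smpHom (T.δ M) (𝟙 R) = T.δ M ≫ T.δ (T.smp M R) := by
  have h1 : T.η R ≫ T.smpHom (T.η R) (𝟙 R)
      = T.η R ≫ T.smpHom (𝟙 R) (T.η R) ≫ T.γ R R R := by
    rw [← T.unit_triangle R R, ← Category.assoc, T.η_natural (T.η R), Category.assoc]
  -- δ M ≫ Q (δ M)
  rw [RightMonoidalStruct.δ]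
  calc (T.smpHom (𝟙 M) (T.η R) ≫ T.γ M R R) ≫
        T.smpHom (T.smpHom (𝟙 M) (T.η R) ≫ T.γ M R R) (𝟙 R)
      = T.smpHom (𝟙 M) (T.η R) ≫ (T.γ M R R ≫ T.smpHom (T.smpHom (𝟙 M) (T.η R)) (𝟙 R)) ≫
          T.smpHom (T.γ M R R) (𝟙 R) := by
        rw [← Category.comp_id (𝟙 R), T.smpHom_comp]; simp
    _ = T.smpHom (𝟙 M) (T.η R) ≫ (T.smpHom (𝟙 M) (T.smpHom (T.η R) (𝟙 R)) ≫ T.γ M (T.smp R R) R) ≫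
          T.smpHom (T.γ M R R) (𝟙 R) := by
        rw [← T.γ_natural (𝟙 M) (T.η R) (𝟙 R)]
    _ = T.smpHom (𝟙 M) (T.η R ≫ T.smpHom (T.η R) (𝟙 R)) ≫ T.γ M (T.smp R R) R ≫
          T.smpHom (T.γ M R R) (𝟙 R) := by
        rw [← Category.id_comp (𝟙 M), T.smpHom_comp]; simp
    _ = T.smpHom (𝟙 M) (T.η R ≫ T.smpHom (𝟙 R) (T.η R) ≫ T.γ R R R) ≫ T.γ M (T.smp R R) R ≫
          T.smpHom (T.γ M R R) (𝟙 R) := by rw [h1]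
    _ = T.smpHom (𝟙 M) (T.η R) ≫ T.smpHom (𝟙 M) (T.smpHom (𝟙 R) (T.η R)) ≫
          (T.smpHom (𝟙 M) (T.γ R R R) ≫ T.γ M (T.smp R R) R ≫ T.smpHom (T.γ M R R) (𝟙 R)) := by
        rw [← Category.id_comp (𝟙 M), T.smpHom_comp, ← Category.id_comp (𝟙 M), T.smpHom_comp]
        simp
    _ = T.smpHom (𝟙 M) (T.η R) ≫ T.smpHom (𝟙 M) (T.smpHom (𝟙 R) (T.η R)) ≫
          T.γ M R (T.smp R R) ≫ T.γ (T.smp M R) R R := by rw [T.pentagon]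
    _ = T.smpHom (𝟙 M) (T.η R) ≫ (T.γ M R R ≫ T.smpHom (T.smpHom (𝟙 M) (𝟙 R)) (T.η R)) ≫
          T.γ (T.smp M R) R R := by
        rw [← T.γ_natural (𝟙 M) (𝟙 R) (T.η R)]; simp
    _ = (T.smpHom (𝟙 M) (T.η R) ≫ T.γ M R R) ≫ T.smpHom (𝟙 (T.smp M R)) (T.η R) ≫
          T.γ (T.smp M R) R R := by rw [T.smpHom_id]; simp

end Basics

section SxBasics

variable (Sx : RightMonoidalStruct C R)
variable [∀ L M N : C, IsIso (Sx.γ L M N)] [∀ M : C, IsIso (Sx.η M)] [∀ M : C, IsIso (Sx.ε M)]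

/-- `λ_R = ρ_R` : `ε_R ≫ η_R = 𝟙`. -/
lemma epsR_etaR : Sx.ε R ≫ Sx.η R = 𝟙 _ := by
  have h : inv (Sx.ε R) = Sx.η R := IsIso.inv_eq_of_inv_hom_id Sx.unit_counit
  rw [← h, IsIso.hom_inv_id]

/-- `𝟙_R ⊗ λ⁻¹_X = λ⁻¹_{R⊗X}`. -/
lemma etaRX (X : C) : Sx.smpHom (𝟙 R) (Sx.η X) = Sx.η (Sx.smp R X) := by
  rw [← cancel_mono (Sx.γ R R X), Sx.unit_triangle R X,
    ← cancel_mono (Sx.smpHom (Sx.ε R) (𝟙 X)), Category.assoc, Sx.mixed_triangle,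
    ← Sx.smpHom_comp, Sx.unit_counit, Category.comp_id, Sx.smpHom_id]

/-- `ε_X ⊗ 𝟙_R = ρ_{X⊗R}`. -/
lemma epsXR (X : C) : Sx.smpHom (Sx.ε X) (𝟙 R) = Sx.ε (Sx.smp X R) := by
  rw [← cancel_epi (Sx.γ X R R)]
  rw [Sx.counit_triangle, ← cancel_epi (Sx.smpHom (𝟙 X) (Sx.η R)), Sx.mixed_triangle,
    ← Sx.smpHom_comp, Sx.unit_counit, Category.id_comp, Sx.smpHom_id]


end SxBasics


section SxMore

variable (Sx : RightMonoidalStruct C R)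
variable [∀ L M N : C, IsIso (Sx.γ L M N)] [∀ M : C, IsIso (Sx.η M)] [∀ M : C, IsIso (Sx.ε M)]

lemma gammax_inv_natural {L L' M M' N N' : C} (f : L ⟶ L') (g : M ⟶ M') (h : N ⟶ N') :
    Sx.smpHom (Sx.smpHom f g) h ≫ inv (Sx.γ L' M' N')
      = inv (Sx.γ L M N) ≫ Sx.smpHom f (Sx.smpHom g h) := by
  rw [IsIso.comp_inv_eq, Category.assoc, IsIso.eq_inv_comp, ← Sx.γ_natural]

lemma pentagon_inv (K L M X : C) :
    Sx.smpHom (inv (Sx.γ K L M)) (𝟙 X) ≫ inv (Sx.γ K (Sx.smp L M) X)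
      = inv (Sx.γ (Sx.smp K L) M X) ≫ inv (Sx.γ K L (Sx.smp M X))
          ≫ Sx.smpHom (𝟙 K) (Sx.γ L M X) := by
  have h : Sx.γ K (Sx.smp L M) X ≫ Sx.smpHom (Sx.γ K L M) (𝟙 X)
      = (Sx.smpHom (𝟙 K) (inv (Sx.γ L M X)) ≫ Sx.γ K L (Sx.smp M X))
          ≫ Sx.γ (Sx.smp K L) M X := by
    have e : Sx.smpHom (𝟙 K) (inv (Sx.γ L M X))
        = inv (Sx.smpHom (𝟙 K) (Sx.γ L M X)) := by
      rw [inv_smpHom, IsIso.inv_id]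
    rw [Category.assoc, e, IsIso.eq_inv_comp]
    exact Sx.pentagon K L M X
  have l1 : Sx.smpHom (inv (Sx.γ K L M)) (𝟙 X)
      = inv (Sx.smpHom (Sx.γ K L M) (𝟙 X)) := by rw [inv_smpHom, IsIso.inv_id]
  have l2 : Sx.smpHom (𝟙 K) (Sx.γ L M X)
      = inv (Sx.smpHom (𝟙 K) (inv (Sx.γ L M X))) := by
    rw [inv_smpHom, IsIso.inv_id, IsIso.inv_inv]
  rw [l1, l2, ← IsIso.inv_comp, ← IsIso.inv_comp, ← IsIso.inv_comp]
  exact IsIso.inv_eq_of_hom_inv_id (by rw [h, IsIso.hom_inv_id])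

/-- `(ρ⁻¹_M ⊗ 𝟙_X) ≫ α⁻¹_{M,R,X} = 𝟙_M ⊗ λ⁻¹_X`. -/
lemma rho_gamma (M X : C) :
    Sx.smpHom (inv (Sx.ε M)) (𝟙 X) ≫ inv (Sx.γ M R X) = Sx.smpHom (𝟙 M) (Sx.η X) := by
  have e : Sx.smpHom (inv (Sx.ε M)) (𝟙 X) = inv (Sx.smpHom (Sx.ε M) (𝟙 X)) := by
    rw [inv_smpHom, IsIso.inv_id]
  rw [e, ← IsIso.inv_comp]
  exact IsIso.inv_eq_of_inv_hom_id (Sx.mixed_triangle M X)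

/-- `α⁻¹_{R,X,Y} = (λ_X ⊗ 𝟙_Y) ≫ λ⁻¹_{X⊗Y}`. -/
lemma eta_gamma (X Y : C) :
    Sx.smpHom (inv (Sx.η X)) (𝟙 Y) ≫ Sx.η (Sx.smp X Y) = inv (Sx.γ R X Y) := by
  have e : Sx.smpHom (inv (Sx.η X)) (𝟙 Y) = inv (Sx.smpHom (Sx.η X) (𝟙 Y)) := by
    rw [inv_smpHom, IsIso.inv_id]
  rw [e, IsIso.inv_comp_eq, IsIso.eq_comp_inv]
  exact Sx.unit_triangle X Y

end SxMore

section W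

variable (S Sx : RightMonoidalStruct C R)
variable [∀ L M N : C, IsIso (Sx.γ L M N)] [∀ M : C, IsIso (Sx.η M)] [∀ M : C, IsIso (Sx.ε M)]
variable (w : ∀ M N : C, S.smp N M ⟶ Sx.smp M (S.smp N R)) (hw : GoodWco S Sx w)

/-- The inverse of `w`. -/
noncomputable def winv (M N : C) : Sx.smp M (S.smp N R) ⟶ S.smp N M :=
  @inv _ _ _ _ (w M N) (hw.iso M N)

lemma w_winv (M N : C) : w M N ≫ winv S Sx w hw M N = 𝟙 _ := by
  haveI := hw.iso M N; exact IsIso.hom_inv_id _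

lemma winv_w (M N : C) : winv S Sx w hw M N ≫ w M N = 𝟙 _ := by
  haveI := hw.iso M N; exact IsIso.inv_hom_id _

lemma winv_nat {M M' N N' : C} (f : M ⟶ M') (g : N ⟶ N') :
    Sx.smpHom f (S.smpHom g (𝟙 R)) ≫ winv S Sx w hw M' N'
      = winv S Sx w hw M N ≫ S.smpHom g f := by
  haveI := hw.iso M N; haveI := hw.iso M' N'
  rw [← cancel_epi (w M N), ← Category.assoc, ← hw.natural f g, Category.assoc,
    winv]
  show _ ≫ _ ≫ inv (w M' N') = _
  rw [IsIso.hom_inv_id, Category.comp_id, ← Category.assoc]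
  show _ = (w M N ≫ inv (w M N)) ≫ _
  rw [IsIso.hom_inv_id, Category.id_comp]

lemma winv_w_assoc (M N : C) {Z : C} (h : Sx.smp M (S.smp N R) ⟶ Z) :
    winv S Sx w hw M N ≫ w M N ≫ h = h := by
  rw [← Category.assoc, winv_w, Category.id_comp]

lemma w_winv_assoc (M N : C) {Z : C} (h : S.smp N M ⟶ Z) :
    w M N ≫ winv S Sx w hw M N ≫ h = h := by
  rw [← Category.assoc, w_winv, Category.id_comp]

lemma heptagon' (L M N : C) :
    S.γ N M L ≫ w L (S.smp N M)
      = S.smpHom (𝟙 N) (w L M) ≫ w (Sx.smp L (S.smp M R)) N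
          ≫ inv (Sx.γ L (S.smp M R) (S.smp N R))
          ≫ Sx.smpHom (𝟙 L) (winv S Sx w hw (S.smp M R) N)
          ≫ Sx.smpHom (𝟙 L) (S.γ N M R) :=
  hw.heptagon L M N

/-- The heptagon solved for `𝟙_L ⊗ (w⁻¹_{QM,N} ≫ γ_{N,M,R})`. -/
lemma hepta_solved (L M N : C) :
    Sx.smpHom (𝟙 L) (winv S Sx w hw (S.smp M R) N) ≫ Sx.smpHom (𝟙 L) (S.γ N M R)
      = Sx.γ L (S.smp M R) (S.smp N R)
          ≫ winv S Sx w hw (Sx.smp L (S.smp M R)) N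
          ≫ S.smpHom (𝟙 N) (winv S Sx w hw L M)
          ≫ S.γ N M L ≫ w L (S.smp N M) := by
  rw [heptagon' S Sx w hw L M N]
  have c1 : S.smpHom (𝟙 N) (winv S Sx w hw L M) ≫ S.smpHom (𝟙 N) (w L M) = 𝟙 _ := by
    rw [← S.smpHom_comp, winv_w, Category.comp_id, S.smpHom_id]
  rw [← Category.assoc (S.smpHom (𝟙 N) (winv S Sx w hw L M)), c1, Category.id_comp,
    winv_w_assoc, IsIso.hom_inv_id_assoc]

/-- Step (ii) → (iii): the tetrahedral map built from `w`. -/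
noncomputable def tOf (L M N : C) : S.smp N (Sx.smp L M) ⟶ Sx.smp L (S.smp N M) :=
  w (Sx.smp L M) N ≫ inv (Sx.γ L M (S.smp N R)) ≫ Sx.smpHom (𝟙 L) (winv S Sx w hw M N)

lemma A_natural {L L' M M' N N' : C} (f : L ⟶ L') (g : M ⟶ M') (h : N ⟶ N') :
    S.smpHom h (Sx.smpHom f g) ≫ tOf S Sx w hw L' M' N'
      = tOf S Sx w hw L M N ≫ Sx.smpHom f (S.smpHom h g) := by
  unfold tOf
  have e3 : Sx.smpHom f (Sx.smpHom g (S.smpHom h (𝟙 R)))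
        ≫ Sx.smpHom (𝟙 L') (winv S Sx w hw M' N')
      = Sx.smpHom (𝟙 L) (winv S Sx w hw M N) ≫ Sx.smpHom f (S.smpHom h g) := by
    rw [← Sx.smpHom_comp, ← Sx.smpHom_comp, Category.comp_id, Category.id_comp, winv_nat]
  rw [reassoc_of% (hw.natural (Sx.smpHom f g) h),
    reassoc_of% (gammax_inv_natural Sx f g (S.smpHom h (𝟙 R))), e3]
  simp only [Category.assoc]

lemma A_pentagon₁ (K L M N : C) :
    S.smpHom (𝟙 N) (inv (Sx.γ K L M)) ≫ tOf S Sx w hw K (Sx.smp L M) N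
        ≫ Sx.smpHom (𝟙 K) (tOf S Sx w hw L M N)
      = tOf S Sx w hw (Sx.smp K L) M N ≫ inv (Sx.γ K L (S.smp N M)) := by
  unfold tOf
  have h1 := hw.natural (inv (Sx.γ K L M)) (𝟙 N)
  rw [S.smpHom_id] at h1
  have e : Sx.smpHom (𝟙 (Sx.smp K L)) (winv S Sx w hw M N) ≫ inv (Sx.γ K L (S.smp N M))
      = inv (Sx.γ K L (Sx.smp M (S.smp N R)))
          ≫ Sx.smpHom (𝟙 K) (Sx.smpHom (𝟙 L) (winv S Sx w hw M N)) := by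
    have := gammax_inv_natural Sx (𝟙 K) (𝟙 L) (winv S Sx w hw M N)
    rw [Sx.smpHom_id] at this
    exact this
  rw [smpHom_split_r, smpHom_split_r]
  simp only [Category.assoc]
  -- collapse winv ≫ w inside the K-slot
  have c1 : Sx.smpHom (𝟙 K) (winv S Sx w hw (Sx.smp L M) N)
        ≫ Sx.smpHom (𝟙 K) (w (Sx.smp L M) N) = 𝟙 _ := by
    rw [← Sx.smpHom_comp, winv_w, Category.comp_id, Sx.smpHom_id]
  have c2 : Sx.smpHom (𝟙 K) (Sx.γ L M (S.smp N R))
        ≫ Sx.smpHom (𝟙 K) (inv (Sx.γ L M (S.smp N R))) = 𝟙 _ := by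
    rw [← Sx.smpHom_comp, IsIso.hom_inv_id, Category.comp_id, Sx.smpHom_id]
  rw [reassoc_of% h1]
  rw [reassoc_of% c1, reassoc_of% (pentagon_inv Sx K L M (S.smp N R)), reassoc_of% c2, e]

lemma A_pentagon₂ (K L M N : C) :
    S.smpHom (𝟙 N) (tOf S Sx w hw K L M) ≫ tOf S Sx w hw K (S.smp M L) N
        ≫ Sx.smpHom (𝟙 K) (S.γ N M L)
      = S.γ N M (Sx.smp K L) ≫ tOf S Sx w hw K L (S.smp N M) := by
  have hn := winv_nat S Sx w hw (winv S Sx w hw L M) (𝟙 N)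
  rw [S.smpHom_id] at hn
  have inner : Sx.γ L (S.smp M R) (S.smp N R)
        ≫ Sx.smpHom (winv S Sx w hw L M) (𝟙 (S.smp N R))
        ≫ winv S Sx w hw (S.smp M L) N ≫ S.γ N M L
      = Sx.smpHom (𝟙 L) (winv S Sx w hw (S.smp M R) N ≫ S.γ N M R)
        ≫ winv S Sx w hw L (S.smp N M) := by
    rw [reassoc_of% hn, smpHom_split_r, Category.assoc,
      reassoc_of% (hepta_solved S Sx w hw L M N), w_winv, Category.comp_id]
  have l1 := hw.natural (w (Sx.smp K L) M ≫ inv (Sx.γ K L (S.smp M R))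
      ≫ Sx.smpHom (𝟙 K) (winv S Sx w hw L M)) (𝟙 N)
  rw [S.smpHom_id] at l1
  have r2 := hw.natural (w (Sx.smp K L) M) (𝟙 N)
  rw [S.smpHom_id] at r2
  have l3 := gammax_inv_natural Sx (𝟙 K) (winv S Sx w hw L M) (𝟙 (S.smp N R))
  have r4 := gammax_inv_natural Sx (𝟙 K) (𝟙 L)
      (winv S Sx w hw (S.smp M R) N ≫ S.γ N M R)
  rw [Sx.smpHom_id] at r4
  unfold tOf
  simp only [Category.assoc]
  rw [reassoc_of% l1, smpHom_split_l, smpHom_split_l]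
  simp only [Category.assoc]
  rw [reassoc_of% l3, reassoc_of% (pentagon_inv Sx K L (S.smp M R) (S.smp N R)),
    ← smpHom_split_r, ← smpHom_split_r, ← smpHom_split_r]
  rw [inner, smpHom_split_r]
  have m2 : Sx.smpHom (𝟙 (Sx.smp K L)) (winv S Sx w hw (S.smp M R) N)
        ≫ Sx.smpHom (𝟙 (Sx.smp K L)) (S.γ N M R)
      = Sx.smpHom (𝟙 (Sx.smp K L)) (winv S Sx w hw (S.smp M R) N ≫ S.γ N M R) :=
    (smpHom_split_r Sx _ _).symm
  conv_rhs => rw [reassoc_of% (heptagon' S Sx w hw (Sx.smp K L) M N), reassoc_of% r2,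
    reassoc_of% m2, reassoc_of% r4]
lemma A_unit (M N : C) :
    tOf S Sx w hw R M N ≫ inv (Sx.η (S.smp N M)) = S.smpHom (𝟙 N) (inv (Sx.η M)) := by
  unfold tOf
  have h1 := hw.natural (inv (Sx.η M)) (𝟙 N)
  rw [S.smpHom_id] at h1
  have h2 : Sx.η (Sx.smp M (S.smp N R)) ≫ Sx.smpHom (𝟙 R) (winv S Sx w hw M N)
      = winv S Sx w hw M N ≫ Sx.η (S.smp N M) := (Sx.η_natural (winv S Sx w hw M N)).symm
  rw [← eta_gamma Sx M (S.smp N R)]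
  simp only [Category.assoc]
  rw [← reassoc_of% h1, reassoc_of% h2, w_winv_assoc, IsIso.hom_inv_id, Category.comp_id]

lemma A_counit (M N : C) :
    S.η (Sx.smp M N) ≫ tOf S Sx w hw M N R = Sx.smpHom (𝟙 M) (S.η N) := by
  unfold tOf
  have g1 := gammax_inv_natural Sx (𝟙 M) (𝟙 N) (S.η R)
  rw [Sx.smpHom_id] at g1
  have g2 : inv (Sx.ε (Sx.smp M N)) ≫ inv (Sx.γ M N R) = Sx.smpHom (𝟙 M) (inv (Sx.ε N)) := by
    rw [← IsIso.inv_comp]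
    exact IsIso.inv_eq_of_hom_inv_id (by
      rw [Sx.counit_triangle, ← Sx.smpHom_comp, IsIso.hom_inv_id, Category.comp_id,
        Sx.smpHom_id])
  have inner2 : inv (Sx.ε N) ≫ Sx.smpHom (𝟙 N) (S.η R) ≫ winv S Sx w hw N R = S.η N := by
    rw [← Category.assoc, ← hw.tetragon N, Category.assoc, w_winv, Category.comp_id]
  rw [reassoc_of% (hw.tetragon (Sx.smp M N)), reassoc_of% g1, reassoc_of% g2,
    ← smpHom_split_r, ← smpHom_split_r, inner2]

lemma A_CoTetraHom : CoTetraHom S Sx (tOf S Sx w hw) :=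
  ⟨fun f g h => A_natural S Sx w hw f g h, A_pentagon₁ S Sx w hw, A_pentagon₂ S Sx w hw,
    A_unit S Sx w hw, A_counit S Sx w hw⟩

lemma A_wOfCo_eq (M N : C) :
    wOfCo S Sx (tOf S Sx w hw) M N
      = w M N ≫ Sx.smpHom (𝟙 M) (Sx.η (S.smp N R) ≫ winv S Sx w hw R N) := by
  unfold wOfCo tOf
  have h1 := hw.natural (inv (Sx.ε M)) (𝟙 N)
  rw [S.smpHom_id] at h1
  rw [reassoc_of% h1, reassoc_of% (rho_gamma Sx M (S.smp N R)), ← smpHom_split_r]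

lemma A_wOfCo_iso (M N : C) : IsIso (wOfCo S Sx (tOf S Sx w hw) M N) := by
  rw [A_wOfCo_eq]
  haveI := hw.iso M N
  haveI : IsIso (winv S Sx w hw R N) := by
    haveI := hw.iso R N; unfold winv; infer_instance
  infer_instance

end W

section B

variable (S Sx : RightMonoidalStruct C R)
variable [∀ L M N : C, IsIso (Sx.γ L M N)] [∀ M : C, IsIso (Sx.η M)] [∀ M : C, IsIso (Sx.ε M)]
variable (t : ∀ L M N : C, S.smp N (Sx.smp L M) ⟶ Sx.smp L (S.smp N M))

lemma B_natural (ht : CoTetraHom S Sx t) {M M' N N' : C} (f : M ⟶ M') (g : N ⟶ N') :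
    S.smpHom g f ≫ wOfCo S Sx t M' N'
      = wOfCo S Sx t M N ≫ Sx.smpHom f (S.smpHom g (𝟙 R)) := by
  unfold wOfCo
  have e : f ≫ inv (Sx.ε M') = inv (Sx.ε M) ≫ Sx.smpHom f (𝟙 R) := by
    rw [IsIso.eq_inv_comp, ← Category.assoc, ← Sx.ε_natural f, Category.assoc,
      IsIso.hom_inv_id, Category.comp_id]
  have e2 : S.smpHom g f ≫ S.smpHom (𝟙 N') (inv (Sx.ε M'))
      = S.smpHom (𝟙 N) (inv (Sx.ε M)) ≫ S.smpHom g (Sx.smpHom f (𝟙 R)) := by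
    rw [← S.smpHom_comp, ← S.smpHom_comp, Category.comp_id, Category.id_comp, e]
  rw [← Category.assoc, e2, Category.assoc, ht.natural f (𝟙 R) g, Category.assoc]

lemma B_star (ht : CoTetraHom S Sx t) (K L N : C) :
    t K L N ≫ Sx.smpHom (𝟙 K) (wOfCo S Sx t L N)
      = wOfCo S Sx t (Sx.smp K L) N ≫ inv (Sx.γ K L (S.smp N R)) := by
  have p := ht.pentagon₁ K L R N
  have tL : t L R N = S.smpHom (𝟙 N) (Sx.ε L) ≫ wOfCo S Sx t L N := by
    unfold wOfCo
    rw [← Category.assoc, ← S.smpHom_comp, Category.comp_id, IsIso.hom_inv_id,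
      S.smpHom_id, Category.id_comp]
  have tKL : t (Sx.smp K L) R N
      = S.smpHom (𝟙 N) (Sx.ε (Sx.smp K L)) ≫ wOfCo S Sx t (Sx.smp K L) N := by
    unfold wOfCo
    rw [← Category.assoc, ← S.smpHom_comp, Category.comp_id, IsIso.hom_inv_id,
      S.smpHom_id, Category.id_comp]
  have nat1 : t K (Sx.smp L R) N ≫ Sx.smpHom (𝟙 K) (S.smpHom (𝟙 N) (Sx.ε L))
      = S.smpHom (𝟙 N) (Sx.smpHom (𝟙 K) (Sx.ε L)) ≫ t K L N :=
    (ht.natural (𝟙 K) (Sx.ε L) (𝟙 N)).symm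
  have m : S.smpHom (𝟙 N) (inv (Sx.γ K L R)) ≫ S.smpHom (𝟙 N) (Sx.smpHom (𝟙 K) (Sx.ε L))
      = S.smpHom (𝟙 N) (Sx.ε (Sx.smp K L)) := by
    rw [← S.smpHom_comp, Category.comp_id]
    congr 1
    rw [← Sx.counit_triangle, IsIso.inv_hom_id_assoc]
  rw [tL, tKL, smpHom_split_r, reassoc_of% nat1, reassoc_of% m, Category.assoc] at p
  exact (cancel_epi (S.smpHom (𝟙 N) (Sx.ε (Sx.smp K L)))).1 p

lemma B_L1 (ht : CoTetraHom S Sx t) (N : C) : wOfCo S Sx t R N = Sx.η (S.smp N R) := by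
  unfold wOfCo
  have h' : t R R N = S.smpHom (𝟙 N) (inv (Sx.η R)) ≫ Sx.η (S.smp N R) := by
    rw [← ht.unit R N, Category.assoc, IsIso.inv_hom_id, Category.comp_id]
  have hinv : inv (Sx.ε R) ≫ inv (Sx.η R) = 𝟙 _ := by
    rw [IsIso.inv_comp_eq, Category.comp_id]
    exact IsIso.inv_eq_of_hom_inv_id Sx.unit_counit
  rw [h', ← Category.assoc, ← S.smpHom_comp, Category.comp_id, hinv, S.smpHom_id,
    Category.id_comp]

lemma B_tetragon (ht : CoTetraHom S Sx t) (M : C) :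
    S.η M ≫ wOfCo S Sx t M R = inv (Sx.ε M) ≫ Sx.smpHom (𝟙 M) (S.η R) := by
  unfold wOfCo
  rw [← Category.assoc, ← S.η_natural (inv (Sx.ε M)), Category.assoc, ht.counit M R]

lemma B_heptagon (ht : CoTetraHom S Sx t)
    (hio : ∀ M N : C, IsIso (wOfCo S Sx t M N)) (L M N : C) :
    S.γ N M L ≫ wOfCo S Sx t L (S.smp N M)
      = S.smpHom (𝟙 N) (wOfCo S Sx t L M) ≫ wOfCo S Sx t (Sx.smp L (S.smp M R)) N
          ≫ inv (Sx.γ L (S.smp M R) (S.smp N R))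
          ≫ Sx.smpHom (𝟙 L)
              (@inv _ _ _ _ (wOfCo S Sx t (S.smp M R) N) (hio (S.smp M R) N))
          ≫ Sx.smpHom (𝟙 L) (S.γ N M R) := by
  haveI : ∀ M N : C, IsIso (wOfCo S Sx t M N) := hio
  have star := B_star S Sx t ht L (S.smp M R) N
  have tformula : t L (S.smp M R) N
      = wOfCo S Sx t (Sx.smp L (S.smp M R)) N
        ≫ inv (Sx.γ L (S.smp M R) (S.smp N R))
        ≫ Sx.smpHom (𝟙 L) (inv (wOfCo S Sx t (S.smp M R) N)) := by
    rw [← Category.assoc, ← star, Category.assoc, ← Sx.smpHom_comp, Category.comp_id,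
      IsIso.hom_inv_id, Sx.smpHom_id, Category.comp_id]
  have p2 := ht.pentagon₂ L R M N
  have split : S.smpHom (𝟙 N) (wOfCo S Sx t L M)
      = S.smpHom (𝟙 N) (S.smpHom (𝟙 M) (inv (Sx.ε L))) ≫ S.smpHom (𝟙 N) (t L R M) := by
    unfold wOfCo; rw [smpHom_split_r]
  have gnat : S.smpHom (𝟙 N) (S.smpHom (𝟙 M) (inv (Sx.ε L))) ≫ S.γ N M (Sx.smp L R)
      = S.γ N M L ≫ S.smpHom (𝟙 (S.smp N M)) (inv (Sx.ε L)) := by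
    have h := S.γ_natural (𝟙 N) (𝟙 M) (inv (Sx.ε L))
    rw [S.smpHom_id] at h
    exact h
  conv_rhs => rw [← reassoc_of% tformula, split, Category.assoc, p2, reassoc_of% gnat]
  rw [show S.smpHom (𝟙 (S.smp N M)) (inv (Sx.ε L)) ≫ t L R (S.smp N M)
      = wOfCo S Sx t L (S.smp N M) from rfl]

lemma B_GoodWco (ht : CoTetraHom S Sx t)
    (hio : ∀ M N : C, IsIso (wOfCo S Sx t M N)) : GoodWco S Sx (wOfCo S Sx t) :=
  ⟨fun f g => B_natural S Sx t ht f g, hio, B_heptagon S Sx t ht hio, B_tetragon S Sx t ht⟩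

end B


section CC

variable (S Sx : RightMonoidalStruct C R)
variable [∀ L M N : C, IsIso (Sx.γ L M N)] [∀ M : C, IsIso (Sx.η M)] [∀ M : C, IsIso (Sx.ε M)]
variable (w : ∀ M N : C, S.smp N M ⟶ Sx.smp M (S.smp N R)) (hw : GoodWco S Sx w)

include hw

/-- `φ_{M,N} := (𝟙_M ⊗ ε_N) ∘ w_{M,N} : N ⋆ M → M ⊗ N`. -/
noncomputable def phi (M N : C) : S.smp N M ⟶ Sx.smp M N :=
  w M N ≫ Sx.smpHom (𝟙 M) (S.ε N)

/-- `ψ_{M,L} : QL ⋆ M → L ⋆ M`. -/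
noncomputable def psi (M L : C) : S.smp (S.smp L R) M ⟶ S.smp L M :=
  w M (S.smp L R) ≫ Sx.smpHom (𝟙 M) (S.ε (S.smp L R)) ≫ winv S Sx w hw M L

/-- The lax structure `C₂` of the comonad `Q`. -/
noncomputable def C2def (M N : C) :
    Sx.smp (S.smp M R) (S.smp N R) ⟶ S.smp (Sx.smp M N) R :=
  winv S Sx w hw (S.smp M R) N ≫ S.γ N M R ≫ S.smpHom (phi S Sx w M N) (𝟙 R)

lemma phi_nat {M M' N N' : C} (f : M ⟶ M') (g : N ⟶ N') :
    S.smpHom g f ≫ phi S Sx w M' N' = phi S Sx w M N ≫ Sx.smpHom f g := by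
  unfold phi
  simp only [Category.assoc]
  rw [reassoc_of% (hw.natural f g), ← Sx.smpHom_comp, ← Sx.smpHom_comp, Category.comp_id,
    Category.id_comp, S.ε_natural g]

lemma c2_natural {M M' N N' : C} (f : M ⟶ M') (g : N ⟶ N') :
    Sx.smpHom (S.smpHom f (𝟙 R)) (S.smpHom g (𝟙 R)) ≫ C2def S Sx w hw M' N'
      = C2def S Sx w hw M N ≫ S.smpHom (Sx.smpHom f g) (𝟙 R) := by
  unfold C2def
  have n1 := winv_nat S Sx w hw (S.smpHom f (𝟙 R)) g
  have n2 := S.γ_natural g f (𝟙 R)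
  have n3 : S.smpHom (S.smpHom g f) (𝟙 R) ≫ S.smpHom (phi S Sx w M' N') (𝟙 R)
      = S.smpHom (phi S Sx w M N) (𝟙 R) ≫ S.smpHom (Sx.smpHom f g) (𝟙 R) := by
    rw [← S.smpHom_comp, ← S.smpHom_comp, Category.comp_id, phi_nat S Sx w hw f g]
  simp only [Category.assoc]
  rw [reassoc_of% n1, reassoc_of% n2, n3]

/-- Lemma L4: `w_{L',L} ≫ (𝟙 ⊗ δ_L) = (𝟙_L ⋆ η_{L'}) ≫ γ_{L,R,L'} ≫ w_{L',QL}`. -/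
lemma wdelta (hL1 : ∀ N : C, w R N = Sx.η (S.smp N R)) (L L' : C) :
    S.smpHom (𝟙 L) (S.η L') ≫ S.γ L R L' ≫ w L' (S.smp L R)
      = w L' L ≫ Sx.smpHom (𝟙 L') (S.δ L) := by
  have hepta := heptagon' S Sx w hw L' R L
  have s1 : S.smpHom (𝟙 L) (S.η L') ≫ S.smpHom (𝟙 L) (w L' R)
      = S.smpHom (𝟙 L) (inv (Sx.ε L')) ≫ S.smpHom (𝟙 L) (Sx.smpHom (𝟙 L') (S.η R)) := by
    rw [← S.smpHom_comp, Category.comp_id, hw.tetragon L', smpHom_split_r]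
  have s2 := hw.natural (Sx.smpHom (𝟙 L') (S.η R)) (𝟙 L)
  rw [S.smpHom_id] at s2
  have s3 := hw.natural (inv (Sx.ε L')) (𝟙 L)
  rw [S.smpHom_id] at s3
  have s4 := gammax_inv_natural Sx (𝟙 L') (S.η R) (𝟙 (S.smp L R))
  have s5 := rho_gamma Sx L' (S.smp L R)
  have nn := winv_nat S Sx w hw (S.η R) (𝟙 L)
  rw [S.smpHom_id] at nn
  have einv : Sx.η (S.smp L R) ≫ winv S Sx w hw R L = 𝟙 _ := by
    rw [← hL1 L]; exact w_winv S Sx w hw R L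
  have inner : Sx.η (S.smp L R) ≫ Sx.smpHom (S.η R) (𝟙 (S.smp L R))
        ≫ winv S Sx w hw (S.smp R R) L ≫ S.γ L R R = S.δ L := by
    rw [reassoc_of% nn, reassoc_of% einv]; rfl
  rw [hepta, reassoc_of% s1, reassoc_of% s2, reassoc_of% s3,
    reassoc_of% s4, reassoc_of% s5, ← smpHom_split_r, ← smpHom_split_r, ← smpHom_split_r]
  rw [inner]

/-- Lemma L5: `(𝟙_L ⋆ η_M) ≫ γ_{L,R,M} ≫ ψ_{M,L} = 𝟙`. -/
lemma psi_retract (hL1 : ∀ N : C, w R N = Sx.η (S.smp N R)) (L M : C) :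
    S.smpHom (𝟙 L) (S.η M) ≫ S.γ L R M ≫ psi S Sx w hw M L = 𝟙 (S.smp L M) := by
  unfold psi
  have m : Sx.smpHom (𝟙 M) (S.δ L) ≫ Sx.smpHom (𝟙 M) (S.ε (S.smp L R)) = 𝟙 _ := by
    rw [← Sx.smpHom_comp, Category.comp_id, delta_counit_left, Sx.smpHom_id]
  rw [reassoc_of% (wdelta S Sx w hw hL1 L M), reassoc_of% m, w_winv]

lemma zeta3 (hL1 : ∀ N : C, w R N = Sx.η (S.smp N R)) (L M : C) :
    S.smpHom (𝟙 L) (S.η (S.smp M R)) ≫ S.γ L R (S.smp M R) ≫ S.γ (S.smp L R) M R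
        ≫ S.smpHom (psi S Sx w hw M L) (𝟙 R)
      = S.γ L M R := by
  have m1 : S.smpHom (𝟙 L) (S.η (S.smp M R)) ≫ S.smpHom (𝟙 L) (S.γ R M R)
      = S.smpHom (𝟙 L) (S.smpHom (S.η M) (𝟙 R)) := by
    rw [← S.smpHom_comp, Category.comp_id, S.unit_triangle]
  have m2 := S.γ_natural (𝟙 L) (S.η M) (𝟙 R)
  have m3 : S.smpHom (S.smpHom (𝟙 L) (S.η M)) (𝟙 R) ≫ S.smpHom (S.γ L R M) (𝟙 R)
        ≫ S.smpHom (psi S Sx w hw M L) (𝟙 R) = 𝟙 _ := by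
    rw [← smpHom_split_l, ← smpHom_split_l, psi_retract S Sx w hw hL1 L M, S.smpHom_id]
  rw [← reassoc_of% (S.pentagon L R M R), reassoc_of% m1, reassoc_of% m2, m3,
    Category.comp_id]

lemma zeta (hL1 : ∀ N : C, w R N = Sx.η (S.smp N R)) (M L : C) :
    Sx.smpHom (𝟙 (S.smp M R)) (S.δ L) ≫ winv S Sx w hw (S.smp M R) (S.smp L R)
        ≫ S.γ (S.smp L R) M R ≫ S.smpHom (psi S Sx w hw M L) (𝟙 R)
      = winv S Sx w hw (S.smp M R) L ≫ S.γ L M R := by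
  haveI := hw.iso (S.smp M R) L
  rw [← cancel_epi (w (S.smp M R) L), w_winv_assoc,
    ← reassoc_of% (wdelta S Sx w hw hL1 L (S.smp M R)), w_winv_assoc]
  exact zeta3 S Sx w hw hL1 L M


lemma winv_L1 (hL1 : ∀ N : C, w R N = Sx.η (S.smp N R)) (M : C) :
    winv S Sx w hw R M = inv (Sx.η (S.smp M R)) := by
  have h : Sx.η (S.smp M R) ≫ winv S Sx w hw R M = 𝟙 _ := by
    rw [← hL1 M]; exact w_winv S Sx w hw R M
  exact (IsIso.inv_eq_of_hom_inv_id h).symm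

lemma lax_unit' (hL1 : ∀ N : C, w R N = Sx.η (S.smp N R)) (X : C) :
    Sx.η (S.smp X R) ≫ Sx.smpHom (S.η R) (𝟙 (S.smp X R)) ≫ C2def S Sx w hw R X
      = S.smpHom (Sx.η X) (𝟙 R) := by
  unfold C2def
  have a := winv_nat S Sx w hw (S.η R) (𝟙 X)
  rw [S.smpHom_id] at a
  have b : Sx.η (S.smp X R) ≫ winv S Sx w hw R X = 𝟙 _ := by
    rw [← hL1 X]; exact w_winv S Sx w hw R X
  have c : phi S Sx w R X = S.ε X ≫ Sx.η X := by
    unfold phi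
    rw [hL1 X, ← Sx.η_natural (S.ε X)]
  rw [reassoc_of% a, reassoc_of% b, c, smpHom_split_l, ← Category.assoc, ← Category.assoc]
  rw [show (S.smpHom (𝟙 X) (S.η R) ≫ S.γ X R R) ≫ S.smpHom (S.ε X) (𝟙 R)
      = S.δ X ≫ S.smpHom (S.ε X) (𝟙 R) from rfl]
  rw [delta_counit_right, Category.id_comp]

lemma lax_counit' (X : C) :
    Sx.smpHom (𝟙 (S.smp X R)) (S.η R) ≫ C2def S Sx w hw X R ≫ S.smpHom (Sx.ε X) (𝟙 R)
      = Sx.ε (S.smp X R) := by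
  unfold C2def
  have a : Sx.smpHom (𝟙 (S.smp X R)) (S.η R) ≫ winv S Sx w hw (S.smp X R) R
      = Sx.ε (S.smp X R) ≫ S.η (S.smp X R) := by
    haveI := hw.iso (S.smp X R) R
    rw [← cancel_mono (w (S.smp X R) R), Category.assoc, Category.assoc, winv_w,
      Category.comp_id, hw.tetragon (S.smp X R), IsIso.hom_inv_id_assoc]
  have inner : S.η X ≫ phi S Sx w X R ≫ Sx.ε X = 𝟙 X := by
    unfold phi
    have m0 : Sx.smpHom (𝟙 X) (S.η R) ≫ Sx.smpHom (𝟙 X) (S.ε R) = 𝟙 _ := by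
      rw [← Sx.smpHom_comp, Category.id_comp, S.unit_counit, Sx.smpHom_id]
    simp only [Category.assoc]
    rw [reassoc_of% (hw.tetragon X), reassoc_of% m0, IsIso.inv_hom_id]
  have mrg : S.smpHom (S.η X) (𝟙 R) ≫ S.smpHom (phi S Sx w X R) (𝟙 R)
        ≫ S.smpHom (Sx.ε X) (𝟙 R) = 𝟙 _ := by
    rw [← smpHom_split_l, ← smpHom_split_l, inner, S.smpHom_id]
  simp only [Category.assoc]
  rw [reassoc_of% a, reassoc_of% (S.unit_triangle X R), mrg, Category.comp_id]

lemma eps_monoidal' (M N : C) :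
    C2def S Sx w hw M N ≫ S.ε (Sx.smp M N) = Sx.smpHom (S.ε M) (S.ε N) := by
  unfold C2def
  have a : S.smpHom (phi S Sx w M N) (𝟙 R) ≫ S.ε (Sx.smp M N)
      = S.ε (S.smp N M) ≫ phi S Sx w M N := S.ε_natural (phi S Sx w M N)
  have b := hw.natural (S.ε M) (𝟙 N)
  rw [S.smpHom_id] at b
  simp only [Category.assoc]
  rw [a, reassoc_of% (S.counit_triangle N M)]
  unfold phi
  rw [reassoc_of% b, winv_w_assoc, ← Sx.smpHom_comp, Category.comp_id, Category.id_comp]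

lemma dc_unit' : S.η R ≫ S.δ R = S.η R ≫ S.smpHom (S.η R) (𝟙 R) := by
  rw [show S.δ R = S.smpHom (𝟙 R) (S.η R) ≫ S.γ R R R from rfl, ← Category.assoc,
    ← S.η_natural (S.η R), Category.assoc, S.unit_triangle]

lemma gamma_delta (N M : C) :
    S.γ N M R ≫ S.δ (S.smp N M)
      = S.smpHom (𝟙 N) (S.δ M) ≫ S.γ N (S.smp M R) R ≫ S.smpHom (S.γ N M R) (𝟙 R) := by
  have g1 := S.γ_natural (𝟙 N) (𝟙 M) (S.η R)
  rw [S.smpHom_id] at g1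
  rw [show S.δ (S.smp N M) = S.smpHom (𝟙 (S.smp N M)) (S.η R) ≫ S.γ (S.smp N M) R R from rfl,
    show S.δ M = S.smpHom (𝟙 M) (S.η R) ≫ S.γ M R R from rfl,
    ← reassoc_of% g1, ← S.pentagon N M R R, smpHom_split_r]
  simp only [Category.assoc]

lemma dc_monoidal' (hL1 : ∀ N : C, w R N = Sx.η (S.smp N R)) (M N : C) :
    C2def S Sx w hw M N ≫ S.δ (Sx.smp M N)
      = Sx.smpHom (S.δ M) (S.δ N) ≫ C2def S Sx w hw (S.smp M R) (S.smp N R)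
          ≫ S.smpHom (C2def S Sx w hw M N) (𝟙 R) := by
  have d1 := delta_natural S (phi S Sx w M N)
  have d2 := gamma_delta S Sx w hw N M
  have d3 := winv_nat S Sx w hw (S.δ M) (𝟙 N)
  rw [S.smpHom_id] at d3
  have z := zeta S Sx w hw hL1 (S.smp M R) N
  have bridge : phi S Sx w (S.smp M R) (S.smp N R) ≫ C2def S Sx w hw M N
      = psi S Sx w hw (S.smp M R) N ≫ S.γ N M R ≫ S.smpHom (phi S Sx w M N) (𝟙 R) := by
    unfold C2def psi phi
    simp only [Category.assoc]
  have split : Sx.smpHom (S.δ M) (S.δ N)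
      = Sx.smpHom (S.δ M) (𝟙 (S.smp N R)) ≫ Sx.smpHom (𝟙 (S.smp (S.smp M R) R)) (S.δ N) := by
    rw [← Sx.smpHom_comp, Category.comp_id, Category.id_comp]
  conv_lhs => rw [C2def]
  simp only [Category.assoc]
  rw [d1, reassoc_of% d2, ← reassoc_of% d3]
  conv_rhs => rw [split, C2def]
  conv_rhs => simp only [Category.assoc]
  conv_rhs => rw [← smpHom_split_l, bridge, smpHom_split_l, smpHom_split_l]
  conv_rhs => simp only [Category.assoc]
  conv_rhs => rw [reassoc_of% z]

lemma phi_assoc (L M N : C) :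
    S.γ N M L ≫ S.smpHom (phi S Sx w M N) (𝟙 L) ≫ phi S Sx w L (Sx.smp M N)
        ≫ Sx.γ L M N
      = S.smpHom (𝟙 N) (phi S Sx w L M) ≫ phi S Sx w (Sx.smp L M) N := by
  have a := hw.natural (𝟙 L) (phi S Sx w M N)
  have b := heptagon' S Sx w hw L M N
  have c : S.smpHom (phi S Sx w M N) (𝟙 R) ≫ S.ε (Sx.smp M N)
      = S.ε (S.smp N M) ≫ phi S Sx w M N := S.ε_natural (phi S Sx w M N)
  have d := hw.natural (S.ε M) (𝟙 N)
  rw [S.smpHom_id] at d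
  have e5 : inv (Sx.γ L (S.smp M R) (S.smp N R))
        ≫ Sx.smpHom (𝟙 L) (Sx.smpHom (S.ε M) (S.ε N)) ≫ Sx.γ L M N
      = Sx.smpHom (Sx.smpHom (𝟙 L) (S.ε M)) (S.ε N) := by
    rw [← Category.assoc, ← gammax_inv_natural Sx (𝟙 L) (S.ε M) (S.ε N), Category.assoc,
      IsIso.inv_hom_id, Category.comp_id]
  have f := hw.natural (Sx.smpHom (𝟙 L) (S.ε M)) (𝟙 N)
  rw [S.smpHom_id] at f
  have inner : winv S Sx w hw (S.smp M R) N ≫ S.γ N M R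
        ≫ S.smpHom (phi S Sx w M N) (𝟙 R) ≫ S.ε (Sx.smp M N)
      = Sx.smpHom (S.ε M) (S.ε N) := by
    have h := eps_monoidal' S Sx w hw M N
    unfold C2def at h
    simpa only [Category.assoc] using h
  conv_lhs => rw [show phi S Sx w L (Sx.smp M N)
      = w L (Sx.smp M N) ≫ Sx.smpHom (𝟙 L) (S.ε (Sx.smp M N)) from rfl]
  simp only [Category.assoc]
  rw [reassoc_of% a, reassoc_of% b, smpHom_merge_r, smpHom_merge_r, smpHom_merge_r]
  simp only [Category.assoc]
  rw [inner, e5]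
  conv_rhs => rw [show phi S Sx w L M = w L M ≫ Sx.smpHom (𝟙 L) (S.ε M) from rfl,
    show phi S Sx w (Sx.smp L M) N
      = w (Sx.smp L M) N ≫ Sx.smpHom (𝟙 (Sx.smp L M)) (S.ε N) from rfl,
    smpHom_split_r]
  conv_rhs => rw [Category.assoc, reassoc_of% f, ← Sx.smpHom_comp, Category.comp_id,
    Category.id_comp]


lemma lax_assoc' (L M N : C) :
    Sx.smpHom (𝟙 (S.smp L R)) (C2def S Sx w hw M N) ≫ C2def S Sx w hw L (Sx.smp M N)
        ≫ S.smpHom (Sx.γ L M N) (𝟙 R)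
      = Sx.γ (S.smp L R) (S.smp M R) (S.smp N R)
          ≫ Sx.smpHom (C2def S Sx w hw L M) (𝟙 (S.smp N R))
          ≫ C2def S Sx w hw (Sx.smp L M) N := by
  have k1 := winv_nat S Sx w hw (𝟙 (S.smp L R)) (phi S Sx w M N)
  have k2 := S.γ_natural (phi S Sx w M N) (𝟙 L) (𝟙 R)
  rw [S.smpHom_id] at k2
  have k3 := winv_nat S Sx w hw (C2def S Sx w hw L M) (𝟙 N)
  rw [S.smpHom_id] at k3
  have k4 := S.γ_natural (𝟙 N) (phi S Sx w L M) (𝟙 R)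
  conv_lhs => rw [C2def, C2def]
  conv_lhs => rw [smpHom_split_r, smpHom_split_r]
  simp only [Category.assoc]
  rw [reassoc_of% (hepta_solved S Sx w hw (S.smp L R) M N), reassoc_of% k1, w_winv_assoc,
    reassoc_of% k2, ← reassoc_of% (S.pentagon N M L R), smpHom_merge_l, smpHom_merge_l,
    ← smpHom_split_l]
  simp only [Category.assoc]
  rw [show S.γ N M L ≫ S.smpHom (phi S Sx w M N) (𝟙 L)
        ≫ phi S Sx w L (Sx.smp M N) ≫ Sx.γ L M N
      = S.smpHom (𝟙 N) (phi S Sx w L M) ≫ phi S Sx w (Sx.smp L M) N from by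
    rw [phi_assoc S Sx w hw L M N]]
  rw [smpHom_split_l]
  conv_rhs => rw [show C2def S Sx w hw (Sx.smp L M) N
      = winv S Sx w hw (S.smp (Sx.smp L M) R) N ≫ S.γ N (Sx.smp L M) R
        ≫ S.smpHom (phi S Sx w (Sx.smp L M) N) (𝟙 R) from rfl]
  conv_rhs => simp only [Category.assoc]
  rw [reassoc_of% k3]
  conv_rhs => rw [show C2def S Sx w hw L M
      = winv S Sx w hw (S.smp L R) M ≫ S.γ M L R
        ≫ S.smpHom (phi S Sx w L M) (𝟙 R) from rfl]
  conv_rhs => rw [smpHom_split_r, smpHom_split_r]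
  conv_rhs => simp only [Category.assoc]
  rw [reassoc_of% k4]

lemma zetaC (hL1 : ∀ N : C, w R N = Sx.η (S.smp N R)) (M L : C) :
    Sx.smpHom (𝟙 (S.smp M R)) (S.δ L) ≫ C2def S Sx w hw M (S.smp L R)
        ≫ S.smpHom (winv S Sx w hw M L) (𝟙 R)
      = winv S Sx w hw (S.smp M R) L ≫ S.γ L M R := by
  have bridge : phi S Sx w M (S.smp L R) ≫ winv S Sx w hw M L = psi S Sx w hw M L := by
    unfold phi psi; simp only [Category.assoc]
  conv_lhs => rw [C2def]
  simp only [Category.assoc]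
  rw [← smpHom_split_l, bridge]
  exact zeta S Sx w hw hL1 M L

lemma hexagonQ (hL1 : ∀ N : C, w R N = Sx.η (S.smp N R)) (L M N : C) :
    (inv (Sx.γ N (S.smp M R) (S.smp L R))
        ≫ Sx.smpHom (𝟙 N) (Sx.smpHom (𝟙 (S.smp M R)) (S.δ L))
        ≫ Sx.smpHom (𝟙 N) (C2def S Sx w hw M (S.smp L R)))
        ≫ Sx.smpHom (𝟙 N) (S.smpHom (winv S Sx w hw M L) (𝟙 R))
        ≫ winv S Sx w hw N (S.smp L M)
      = Sx.smpHom (winv S Sx w hw N M) (S.smpHom (𝟙 L) (𝟙 R))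
          ≫ winv S Sx w hw (S.smp M N) L ≫ S.γ L M N := by
  have k := winv_nat S Sx w hw (winv S Sx w hw N M) (𝟙 L)
  rw [S.smpHom_id] at k
  simp only [Category.assoc]
  rw [smpHom_merge_r, smpHom_merge_r]
  simp only [Category.assoc]
  rw [zetaC S Sx w hw hL1 M L, smpHom_split_r,
    Category.assoc, reassoc_of% (hepta_solved S Sx w hw N M L), w_winv, Category.comp_id,
    IsIso.inv_hom_id_assoc, S.smpHom_id, reassoc_of% k]

/-- The comonad `Q = (- ⋆ R, δ, ε)` with its lax monoidal structure. -/
noncomputable def CoQ (hL1 : ∀ N : C, w R N = Sx.η (S.smp N R)) : MonoidalComonadStr Sx where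
  obj M := S.smp M R
  map f := S.smpHom f (𝟙 R)
  map_id X := S.smpHom_id X R
  map_comp f g := by rw [← S.smpHom_comp, Category.comp_id]
  Δc := S.δ
  εc := S.ε
  Δc_natural f := delta_natural S f
  εc_natural f := S.ε_natural f
  coassoc X := delta_coassoc S X
  counit_left := delta_counit_left S
  counit_right := delta_counit_right S
  C2 := C2def S Sx w hw
  C0 := S.η R
  C2_natural f g := c2_natural S Sx w hw f g
  lax_assoc := lax_assoc' S Sx w hw
  lax_unit := lax_unit' S Sx w hw hL1
  lax_counit := lax_counit' S Sx w hw
  Δc_monoidal := dc_monoidal' S Sx w hw hL1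
  Δc_monoidal_unit := dc_unit' S Sx w hw
  εc_monoidal := eps_monoidal' S Sx w hw
  εc_monoidal_unit := S.unit_counit

lemma CoTwistQ (hL1 : ∀ N : C, w R N = Sx.η (S.smp N R)) :
    CoTwist S Sx (CoQ S Sx w hw hL1) (fun M N => winv S Sx w hw N M) := by
  refine ⟨?_, ?_, ?_, ?_, ?_⟩
  · intro M M' N N' f g
    exact winv_nat S Sx w hw g f
  · intro M N
    haveI := hw.iso N M
    show IsIso (winv S Sx w hw N M)
    unfold winv
    infer_instance
  · intro L M N
    exact hexagonQ S Sx w hw hL1 L M N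
  · intro N
    show (inv (Sx.ε N) ≫ Sx.smpHom (𝟙 N) (S.η R)) ≫ winv S Sx w hw N R = S.η N
    rw [← hw.tetragon N, Category.assoc, w_winv, Category.comp_id]
  · intro M
    show winv S Sx w hw R M ≫ S.ε M = inv (Sx.η (S.smp M R)) ≫ S.ε M
    rw [winv_L1 S Sx w hw hL1 M]

end CC


section D

variable (S Sx : RightMonoidalStruct C R)
variable [∀ L M N : C, IsIso (Sx.γ L M N)] [∀ M : C, IsIso (Sx.η M)] [∀ M : C, IsIso (Sx.ε M)]
variable (Co : MonoidalComonadStr Sx)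
variable (v : ∀ M N : C, Sx.smp N (Co.obj M) ⟶ S.smp M N) (hv : CoTwist S Sx Co v)

include hv

/-- The comparison `u_N := v_{N,R} ∘ λ⁻¹ : CN → QN`. -/
noncomputable def uD (N : C) : Co.obj N ⟶ S.smp N R :=
  Sx.η (Co.obj N) ≫ v N R

/-- The isomorphism `w_{M,N} : N ⋆ M → M ⊗ QN` obtained from the twist. -/
noncomputable def wD (M N : C) : S.smp N M ⟶ Sx.smp M (S.smp N R) :=
  @inv _ _ _ _ (v N M) (hv.iso N M) ≫ Sx.smpHom (𝟙 M) (uD S Sx Co v N)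

noncomputable def vinv (M N : C) : S.smp M N ⟶ Sx.smp N (Co.obj M) :=
  @inv _ _ _ _ (v M N) (hv.iso M N)

lemma v_vinv (M N : C) : v M N ≫ vinv S Sx Co v hv M N = 𝟙 _ := by
  haveI := hv.iso M N; exact IsIso.hom_inv_id _

lemma vinv_v (M N : C) : vinv S Sx Co v hv M N ≫ v M N = 𝟙 _ := by
  haveI := hv.iso M N; exact IsIso.inv_hom_id _

lemma vinv_v_assoc (M N : C) {Z : C} (h : S.smp M N ⟶ Z) :
    vinv S Sx Co v hv M N ≫ v M N ≫ h = h := by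
  rw [← Category.assoc, vinv_v, Category.id_comp]

lemma v_vinv_assoc (M N : C) {Z : C} (h : Sx.smp N (Co.obj M) ⟶ Z) :
    v M N ≫ vinv S Sx Co v hv M N ≫ h = h := by
  rw [← Category.assoc, v_vinv, Category.id_comp]

lemma wD_eq (M N : C) :
    wD S Sx Co v hv M N = vinv S Sx Co v hv N M ≫ Sx.smpHom (𝟙 M) (uD S Sx Co v N) :=
  rfl

lemma vinv_nat {M M' N N' : C} (f : M ⟶ M') (g : N ⟶ N') :
    S.smpHom f g ≫ vinv S Sx Co v hv M' N'
      = vinv S Sx Co v hv M N ≫ Sx.smpHom g (Co.map f) := by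
  haveI := hv.iso M N; haveI := hv.iso M' N'
  rw [← cancel_epi (v M N), ← Category.assoc, ← hv.natural f g, Category.assoc, vinv]
  show _ ≫ _ ≫ inv (v M' N') = _
  rw [IsIso.hom_inv_id, Category.comp_id, v_vinv_assoc]

lemma u_nat {N N' : C} (f : N ⟶ N') :
    Co.map f ≫ uD S Sx Co v N' = uD S Sx Co v N ≫ S.smpHom f (𝟙 R) := by
  unfold uD
  rw [← Category.assoc, Sx.η_natural (Co.map f)]
  simp only [Category.assoc]
  rw [hv.natural f (𝟙 R)]

lemma D_natural {M M' N N' : C} (f : M ⟶ M') (g : N ⟶ N') :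
    S.smpHom g f ≫ wD S Sx Co v hv M' N'
      = wD S Sx Co v hv M N ≫ Sx.smpHom f (S.smpHom g (𝟙 R)) := by
  rw [wD_eq, wD_eq, ← Category.assoc, vinv_nat S Sx Co v hv g f]
  simp only [Category.assoc]
  rw [← Sx.smpHom_comp, Category.comp_id, u_nat S Sx Co v hv g]
  conv_rhs => rw [← Sx.smpHom_comp, Category.id_comp]

lemma D_iso (M N : C) : IsIso (wD S Sx Co v hv M N) := by
  haveI := hv.iso N M
  haveI := hv.iso N R
  haveI : IsIso (uD S Sx Co v N) := by unfold uD; infer_instance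
  unfold wD
  infer_instance

lemma C0_u : Co.C0 ≫ uD S Sx Co v R = S.η R := by
  unfold uD
  have e : Sx.η R = inv (Sx.ε R) := (IsIso.inv_eq_of_inv_hom_id Sx.unit_counit).symm
  rw [← Category.assoc, Sx.η_natural Co.C0, e]
  exact hv.unit R

lemma D_tetragon (M : C) :
    S.η M ≫ wD S Sx Co v hv M R = inv (Sx.ε M) ≫ Sx.smpHom (𝟙 M) (S.η R) := by
  have h1 : S.η M ≫ vinv S Sx Co v hv R M = inv (Sx.ε M) ≫ Sx.smpHom (𝟙 M) Co.C0 := by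
    rw [← hv.unit M, Category.assoc, Category.assoc, v_vinv, Category.comp_id]
  rw [wD_eq, ← Category.assoc, h1, Category.assoc, ← Sx.smpHom_comp, Category.comp_id,
    C0_u S Sx Co v hv]

lemma zetaD (M N : C) :
    Sx.smpHom (𝟙 (Co.obj M)) (Co.Δc N) ≫ Co.C2 M (Co.obj N) ≫ Co.map (v N M)
        ≫ uD S Sx Co v (S.smp N M)
      = Sx.smpHom (uD S Sx Co v M) (𝟙 (Co.obj N)) ≫ v N (S.smp M R) ≫ S.γ N M R := by
  have hex := hv.hexagon N M R
  rw [Co.map_id, ← eta_gamma Sx (Co.obj M) (Co.obj N)] at hex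
  simp only [Category.assoc] at hex
  have m0 : Sx.η (Sx.smp (Co.obj M) (Co.obj N))
        ≫ Sx.smpHom (𝟙 R) (Sx.smpHom (𝟙 (Co.obj M)) (Co.Δc N))
        ≫ Sx.smpHom (𝟙 R) (Co.C2 M (Co.obj N))
        ≫ Sx.smpHom (𝟙 R) (Co.map (v N M)) ≫ v (S.smp N M) R
      = Sx.smpHom (𝟙 (Co.obj M)) (Co.Δc N) ≫ Co.C2 M (Co.obj N) ≫ Co.map (v N M)
        ≫ Sx.η (Co.obj (S.smp N M)) ≫ v (S.smp N M) R := by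
    rw [← reassoc_of% (Sx.η_natural (Sx.smpHom (𝟙 (Co.obj M)) (Co.Δc N))),
      ← reassoc_of% (Sx.η_natural (Co.C2 M (Co.obj N))),
      ← reassoc_of% (Sx.η_natural (Co.map (v N M)))]
  rw [m0] at hex
  have cancel : Sx.smpHom (Sx.η (Co.obj M)) (𝟙 (Co.obj N))
      ≫ Sx.smpHom (inv (Sx.η (Co.obj M))) (𝟙 (Co.obj N)) = 𝟙 _ := by
    rw [← Sx.smpHom_comp, IsIso.hom_inv_id, Category.comp_id, Sx.smpHom_id]
  unfold uD
  rw [show Sx.smpHom (Sx.η (Co.obj M) ≫ v M R) (𝟙 (Co.obj N))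
      = Sx.smpHom (Sx.η (Co.obj M)) (𝟙 (Co.obj N)) ≫ Sx.smpHom (v M R) (𝟙 (Co.obj N)) from by
    rw [← Sx.smpHom_comp, Category.comp_id], Category.assoc, ← hex,
    reassoc_of% cancel]

lemma uD_isIso (N : C) : IsIso (uD S Sx Co v N) := by
  haveI := hv.iso N R
  unfold uD
  infer_instance

lemma wD_inv_eq (M N : C) :
    @inv _ _ _ _ (wD S Sx Co v hv (S.smp M R) N) (D_iso S Sx Co v hv (S.smp M R) N)
      = Sx.smpHom (𝟙 (S.smp M R)) (@inv _ _ _ _ (uD S Sx Co v N) (uD_isIso S Sx Co v hv N))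
          ≫ v N (S.smp M R) := by
  haveI := uD_isIso S Sx Co v hv N
  haveI := D_iso S Sx Co v hv (S.smp M R) N
  apply IsIso.inv_eq_of_hom_inv_id
  rw [wD_eq]
  simp only [Category.assoc]
  rw [smpHom_merge_r, IsIso.hom_inv_id, Sx.smpHom_id, Category.id_comp, vinv_v]

lemma D_heptagon (L M N : C) :
    S.γ N M L ≫ wD S Sx Co v hv L (S.smp N M)
      = S.smpHom (𝟙 N) (wD S Sx Co v hv L M) ≫ wD S Sx Co v hv (Sx.smp L (S.smp M R)) N
          ≫ inv (Sx.γ L (S.smp M R) (S.smp N R))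
          ≫ Sx.smpHom (𝟙 L)
              (@inv _ _ _ _ (wD S Sx Co v hv (S.smp M R) N) (D_iso S Sx Co v hv (S.smp M R) N))
          ≫ Sx.smpHom (𝟙 L) (S.γ N M R) := by
  haveI := hv.iso N (S.smp M L)
  haveI : IsIso (Sx.smpHom (v M L) (𝟙 (Co.obj N))) := by
    haveI := hv.iso M L; infer_instance
  haveI := uD_isIso S Sx Co v hv N
  have hexL := hv.hexagon N M L
  rw [Co.map_id] at hexL
  simp only [Category.assoc] at hexL
  have r0 := hv.natural (𝟙 N) (wD S Sx Co v hv L M)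
  rw [Co.map_id] at r0
  -- r0 : Sx.smpHom (wD L M) (𝟙 (Co.obj N)) ≫ v N (Sx.smp L (S.smp M R))
  --      = v N (S.smp M L) ≫ S.smpHom (𝟙 N) (wD L M)
  have hvw : v M L ≫ wD S Sx Co v hv L M = Sx.smpHom (𝟙 L) (uD S Sx Co v M) := by
    rw [wD_eq, v_vinv_assoc]
  rw [← cancel_epi (v N (S.smp M L)), ← cancel_epi (Sx.smpHom (v M L) (𝟙 (Co.obj N)))]
  conv_lhs => rw [← reassoc_of% hexL]
  conv_lhs => rw [wD_eq]
  conv_lhs => rw [v_vinv_assoc, smpHom_merge_r, smpHom_merge_r, ← smpHom_split_r]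
  conv_lhs => simp only [Category.assoc]
  conv_lhs => rw [zetaD S Sx Co v hv M N]
  have t1 : Sx.smpHom (uD S Sx Co v M) (uD S Sx Co v N)
        ≫ Sx.smpHom (𝟙 (S.smp M R)) (@inv _ _ _ _ (uD S Sx Co v N) (uD_isIso S Sx Co v hv N))
      = Sx.smpHom (uD S Sx Co v M) (𝟙 (Co.obj N)) := by
    rw [← Sx.smpHom_comp, Category.comp_id, IsIso.hom_inv_id]
  -- RHS
  conv_rhs => rw [← reassoc_of% r0]
  conv_rhs => rw [show wD S Sx Co v hv (Sx.smp L (S.smp M R)) N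
      = vinv S Sx Co v hv N (Sx.smp L (S.smp M R))
          ≫ Sx.smpHom (𝟙 (Sx.smp L (S.smp M R))) (uD S Sx Co v N) from rfl]
  conv_rhs => simp only [Category.assoc]
  conv_rhs => rw [v_vinv_assoc, smpHom_merge_l, hvw, smpHom_cross,
    reassoc_of% (gammax_inv_natural Sx (𝟙 L) (uD S Sx Co v M) (uD S Sx Co v N)),
    wD_inv_eq S Sx Co v hv M N, smpHom_merge_r, ← smpHom_split_r]
  conv_rhs => simp only [Category.assoc]
  conv_rhs => rw [reassoc_of% t1]

lemma D_GoodWco : GoodWco S Sx (wD S Sx Co v hv) :=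
  ⟨fun f g => D_natural S Sx Co v hv f g, D_iso S Sx Co v hv, D_heptagon S Sx Co v hv,
    D_tetragon S Sx Co v hv⟩

end D

end Corep

/-- Theorem 9.1 of Szlachányi; the Corepresentability
Theorem.  Let `𝓔` carry a right-monoidal structure `⋆` and an ordinary
monoidal structure `⊗` with the same unit `R`, and let `Q = ⟨- ⋆ R, δ, ε⟩` be
the canonical comonad of the `⋆`-structure.  The following are equivalent:
(i) the `⋆`-structure is `⊗`-corepresentable: there are a `⊗`-monoidal comonad
    `⟨C, Δ, ϵ, C₂, C₀⟩` and a twist isomorphism `M ⋆ N ≅ N ⊗ CM` from the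
    `⋆`-structure to the right-monoidal structure `M ⊙ N := N ⊗ CM` it induces;
(ii) there is a natural isomorphism `w_{M,N} : N ⋆ M → M ⊗ QN` satisfying the
    heptagon and tetragon equations;
(iii) there is a tetrahedral isomorphism `t_{L,M,N} : N⋆(L⊗M) → L⊗(N⋆M)`. -/
theorem corepresentability (S Sx : RightMonoidalStruct C R)
    [∀ L M N : C, IsIso (Sx.γ L M N)]
    [∀ M : C, IsIso (Sx.η M)]
    [∀ M : C, IsIso (Sx.ε M)] :
    ((∃ (Co : MonoidalComonadStr Sx)
        (v : ∀ M N : C, Sx.smp N (Co.obj M) ⟶ S.smp M N), CoTwist S Sx Co v)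
      ↔ (∃ w : ∀ M N : C, S.smp N M ⟶ Sx.smp M (S.smp N R), GoodWco S Sx w)) ∧
    ((∃ w : ∀ M N : C, S.smp N M ⟶ Sx.smp M (S.smp N R), GoodWco S Sx w)
      ↔ (∃ t : ∀ L M N : C, S.smp N (Sx.smp L M) ⟶ Sx.smp L (S.smp N M),
          CoTetraHom S Sx t ∧ ∀ M N : C, IsIso (wOfCo S Sx t M N))) := by
  constructor
  · constructor
    · rintro ⟨Co, v, hv⟩
      exact ⟨Corep.wD S Sx Co v hv, Corep.D_GoodWco S Sx Co v hv⟩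
    · rintro ⟨w, hw⟩
      have ht := Corep.A_CoTetraHom S Sx w hw
      have hio := Corep.A_wOfCo_iso S Sx w hw
      have hw' := Corep.B_GoodWco S Sx (Corep.tOf S Sx w hw) ht hio
      have hL1 := Corep.B_L1 S Sx (Corep.tOf S Sx w hw) ht
      exact ⟨Corep.CoQ S Sx (wOfCo S Sx (Corep.tOf S Sx w hw)) hw' hL1,
        fun M N => Corep.winv S Sx (wOfCo S Sx (Corep.tOf S Sx w hw)) hw' N M,
        Corep.CoTwistQ S Sx (wOfCo S Sx (Corep.tOf S Sx w hw)) hw' hL1⟩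
  · constructor
    · rintro ⟨w, hw⟩
      exact ⟨Corep.tOf S Sx w hw, Corep.A_CoTetraHom S Sx w hw, Corep.A_wOfCo_iso S Sx w hw⟩
    · rintro ⟨t, ht, hio⟩
      exact ⟨wOfCo S Sx t, Corep.B_GoodWco S Sx t ht hio⟩
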